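/- (Correctness of Algorithm 1.) Let Y be a discrete random variable and S a finite set of discrete random variables with Y ∉ S. If M ⊆ S is a Markov blanket of Y within S and for every X ∈ M, Y is not conditionally independent of X given M \ {X}, then M is a Markov boundary of Y within S. -/
import Mathlib


open scoped BigOperators

noncomputable section

/-- `p` is a probability mass function on the finite type `Ω`. -/
def IsDist {Ω : Type*} [Fintype Ω] (p : Ω → ℝ) : Prop :=
  (∀ w, 0 ≤ p w) ∧ ∑ w, p w = 1

/-- Total variation distance between two distributions on the same finite type. -/
def tvDist {Ω : Type*} [Fintype Ω] (p q : Ω → ℝ) : ℝ :=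
  (∑ w, |p w - q w|) / 2

variable {ι : Type*} [Fintype ι] [DecidableEq ι]
variable {α : ι → Type*} [∀ i, Fintype (α i)] [∀ i, DecidableEq (α i)]

/-- Marginal probability, under joint pmf `p`, of the event that the variables in the
collection `A` take the values prescribed by the configuration `x`. -/
def margProb (p : (∀ i, α i) → ℝ) (A : Finset ι) (x : ∀ i, α i) : ℝ :=
  ∑ w : ∀ i, α i, if ∀ i ∈ A, w i = x i then p w else 0

/-- Conditional independence of the collections `A` and `B` given the collection `C`:
`f(a, b | c) = f(a | c) f(b | c)` whenever `f(c) > 0` (stated in multiplied-out form). -/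
def CondIndep (p : (∀ i, α i) → ℝ) (A B C : Finset ι) : Prop :=
  ∀ x : ∀ i, α i, 0 < margProb p C x →
    margProb p (A ∪ B ∪ C) x * margProb p C x =
      margProb p (A ∪ C) x * margProb p (B ∪ C) x

/-- `M` is a Markov blanket of the variable `y` within the collection `T`. -/
def MarkovBlanket (p : (∀ i, α i) → ℝ) (y : ι) (T M : Finset ι) : Prop :=
  M ⊆ T ∧ CondIndep p {y} (T \ M) M

/-- `M` is a Markov boundary of `y` within `T`: a Markov blanket no proper subset of
which is a Markov blanket. -/
def MarkovBoundary (p : (∀ i, α i) → ℝ) (y : ι) (T M : Finset ι) : Prop :=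
  MarkovBlanket p y T M ∧ ∀ M' ⊂ M, ¬ MarkovBlanket p y T M'

/-- Mutual information between the collections `A` and `B`
(with the convention `0 · log(junk) = 0` on zero-probability terms). -/
def MI (p : (∀ i, α i) → ℝ) (A B : Finset ι) : ℝ :=
  ∑ w : ∀ i, α i, p w *
    Real.log (margProb p (A ∪ B) w / (margProb p A w * margProb p B w))

/-- Conditional mutual information between collections `A` and `B` given `C`
(with the convention `0 · log(junk) = 0` on zero-probability terms). -/
def CMI (p : (∀ i, α i) → ℝ) (A B C : Finset ι) : ℝ :=
  ∑ w : (∀ i, α i), p w *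
    Real.log ((margProb p (A ∪ B ∪ C) w * margProb p C w) /
      (margProb p (A ∪ C) w * margProb p (B ∪ C) w))


variable [∀ i, Nonempty (α i)]

lemma margProb_congr (p : (∀ i, α i) → ℝ) (A : Finset ι) {x x' : ∀ i, α i}
    (h : ∀ i ∈ A, x i = x' i) : margProb p A x = margProb p A x' := by
  unfold margProb
  refine Finset.sum_congr rfl fun w _ => ?_
  refine if_congr ⟨fun hw i hi => (hw i hi).trans (h i hi),
    fun hw i hi => (hw i hi).trans (h i hi).symm⟩ rfl rfl

lemma margProb_mono (p : (∀ i, α i) → ℝ) (hp : ∀ w, 0 ≤ p w) {A B : Finset ι}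
    (h : A ⊆ B) (x : ∀ i, α i) : margProb p B x ≤ margProb p A x := by
  refine Finset.sum_le_sum fun w _ => ?_
  by_cases h1 : ∀ i ∈ B, w i = x i
  · rw [if_pos h1, if_pos fun i hi => h1 i (h hi)]
  · rw [if_neg h1]
    split_ifs with h2
    · exact hp w
    · exact le_rfl

lemma margProb_split (p : (∀ i, α i) → ℝ) (D B B' : Finset ι) (hDB : Disjoint D B)
    (hB' : B' ⊆ B) (x : ∀ i, α i) :
    margProb p (D ∪ B') x =
      ∑ u : ∀ i, α i, if (∀ i, i ∉ B → u i = x i) ∧ (∀ i ∈ B', u i = x i)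
        then margProb p (D ∪ B) u else 0 := by
  have : ∀ u : ∀ i, α i,
      (if (∀ i, i ∉ B → u i = x i) ∧ (∀ i ∈ B', u i = x i) then margProb p (D ∪ B) u else 0)
      = ∑ w : ∀ i, α i, if ((∀ i, i ∉ B → u i = x i) ∧ (∀ i ∈ B', u i = x i)) ∧
          (∀ i ∈ D ∪ B, w i = u i) then p w else 0 := by
    intro u
    split_ifs with hc
    · unfold margProb
      refine Finset.sum_congr rfl fun w _ => ?_
      exact (if_congr ⟨fun h => h.2, fun h => ⟨hc, h⟩⟩ rfl rfl).symm
    · rw [Finset.sum_eq_zero]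
      intro w _
      rw [if_neg]
      tauto
  rw [Finset.sum_congr rfl fun u _ => this u, Finset.sum_comm]
  unfold margProb
  refine Finset.sum_congr rfl fun w _ => ?_
  set u₀ : ∀ i, α i := fun i => if i ∈ B then w i else x i with hu₀
  have key : ∀ u : ∀ i, α i,
      (((∀ i, i ∉ B → u i = x i) ∧ (∀ i ∈ B', u i = x i)) ∧ (∀ i ∈ D ∪ B, w i = u i))
      ↔ (u = u₀ ∧ (∀ i ∈ D ∪ B', w i = x i)) := by
    intro u
    constructor
    · rintro ⟨⟨hoff, hB'x⟩, hw⟩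
      constructor
      · funext i
        by_cases hi : i ∈ B
        · rw [hu₀]; simp only [if_pos hi]
          exact (hw i (Finset.mem_union_right _ hi)).symm
        · rw [hu₀]; simp only [if_neg hi]
          exact hoff i hi
      · intro i hi
        rcases Finset.mem_union.mp hi with hiD | hiB'
        · have hiB : i ∉ B := Finset.disjoint_left.mp hDB hiD
          rw [hw i (Finset.mem_union_left _ hiD)]
          exact hoff i hiB
        · rw [hw i (Finset.mem_union_right _ (hB' hiB'))]
          exact hB'x i hiB'
    · rintro ⟨rfl, hQ⟩
      refine ⟨⟨fun i hi => ?_, fun i hi => ?_⟩, fun i hi => ?_⟩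
      · rw [hu₀]; simp [hi]
      · rw [hu₀]; simp only [if_pos (hB' hi)]
        exact hQ i (Finset.mem_union_right _ hi)
      · rcases Finset.mem_union.mp hi with hiD | hiB
        · have hiB : i ∉ B := Finset.disjoint_left.mp hDB hiD
          rw [hu₀]; simp only [if_neg hiB]
          exact hQ i (Finset.mem_union_left _ hiD)
        · rw [hu₀]; simp [hiB]
  calc (if ∀ i ∈ D ∪ B', w i = x i then p w else 0)
      = ∑ u : ∀ i, α i, if u = u₀ ∧ (∀ i ∈ D ∪ B', w i = x i) then p w else 0 := by
        simp only [ite_and]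
        rw [Finset.sum_ite_eq' Finset.univ u₀]
        simp
    _ = _ := by
        refine Finset.sum_congr rfl fun u _ => if_congr (key u).symm rfl rfl

lemma condIndep_decomp (p : (∀ i, α i) → ℝ) (A B C B' : Finset ι)
    (hAB : Disjoint A B) (hCB : Disjoint C B) (hB' : B' ⊆ B)
    (h : CondIndep p A B C) : CondIndep p A B' C := by
  intro x hx
  have hACB : Disjoint (A ∪ C) B := Finset.disjoint_union_left.mpr ⟨hAB, hCB⟩
  have e1 : A ∪ B' ∪ C = (A ∪ C) ∪ B' := by ext i; simp; tauto
  have e3 : B' ∪ C = C ∪ B' := Finset.union_comm _ _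
  rw [e1, e3, margProb_split p (A ∪ C) B B' hACB hB' x,
      margProb_split p C B B' hCB hB' x, Finset.sum_mul, Finset.mul_sum]
  refine Finset.sum_congr rfl fun u _ => ?_
  split_ifs with hcond
  · obtain ⟨hoff, _⟩ := hcond
    have hagree : ∀ E : Finset ι, Disjoint E B → margProb p E u = margProb p E x := by
      intro E hE
      exact margProb_congr p E fun i hi => hoff i (Finset.disjoint_left.mp hE hi)
    have hCu : margProb p C u = margProb p C x := hagree C hCB
    have hACu : margProb p (A ∪ C) u = margProb p (A ∪ C) x := hagree _ hACB
    have hu := h u (by rw [hCu]; exact hx)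
    have e4 : A ∪ B ∪ C = (A ∪ C) ∪ B := by ext i; simp; tauto
    have e5 : B ∪ C = C ∪ B := Finset.union_comm _ _
    rw [e4, e5, hCu, hACu] at hu
    rw [hu]
  · ring

lemma condIndep_weakUnion (p : (∀ i, α i) → ℝ) (hp : ∀ w, 0 ≤ p w)
    (A B C B1 B2 : Finset ι)
    (hAB : Disjoint A B) (hCB : Disjoint C B) (h1 : B1 ⊆ B) (h2 : B2 ⊆ B)
    (h : CondIndep p A B C) : CondIndep p A B1 (B2 ∪ C) := by
  have d1 : CondIndep p A (B1 ∪ B2) C :=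
    condIndep_decomp p A B C (B1 ∪ B2) hAB hCB (Finset.union_subset h1 h2) h
  have d2 : CondIndep p A B2 C :=
    condIndep_decomp p A B C B2 hAB hCB h2 h
  intro x hx
  have hC : 0 < margProb p C x :=
    lt_of_lt_of_le hx (margProb_mono p hp Finset.subset_union_right x)
  have e1 := d1 x hC
  have e2 := d2 x hC
  have f1 : A ∪ B1 ∪ (B2 ∪ C) = A ∪ (B1 ∪ B2) ∪ C := by ext i; simp
  have f2 : A ∪ (B2 ∪ C) = A ∪ B2 ∪ C := (Finset.union_assoc _ _ _).symm
  have f3 : B1 ∪ (B2 ∪ C) = B1 ∪ B2 ∪ C := (Finset.union_assoc _ _ _).symm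
  rw [f1, f2, f3]
  apply mul_right_cancel₀ (ne_of_gt hC)
  linear_combination margProb p (B2 ∪ C) x * e1 - margProb p (B1 ∪ B2 ∪ C) x * e2

/-- correctness of Algorithm 1: a Markov blanket `M` of `Y` within `S`
such that no variable `X ∈ M` is conditionally independent of `Y` given `M \ {X}` is a
Markov boundary of `Y` within `S`. -/
theorem blanket_with_no_redundant_variable_is_boundary
    (p : (∀ i, α i) → ℝ) (hp : IsDist p)
    (y : ι) (S : Finset ι) (hyS : y ∉ S)
    (M : Finset ι) (hbl : MarkovBlanket p y S M)
    (hmin : ∀ X ∈ M, ¬ CondIndep p {y} {X} (M.erase X)) :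
    MarkovBoundary p y S M := by
  refine ⟨hbl, ?_⟩
  intro M' hss hbl'
  obtain ⟨hM'S, hCI⟩ := hbl'
  obtain ⟨X, hXM, hXM'⟩ : ∃ X, X ∈ M ∧ X ∉ M' := by
    obtain ⟨X, hX1, hX2⟩ := Finset.exists_of_ssubset hss
    exact ⟨X, hX1, hX2⟩
  have hMS : M ⊆ S := hbl.1
  have hM'M : M' ⊆ M.erase X := fun i hi =>
    Finset.mem_erase.mpr ⟨fun h => hXM' (h ▸ hi), hss.subset hi⟩
  have hAB : Disjoint {y} (S \ M') := by
    simp only [Finset.disjoint_singleton_left, Finset.mem_sdiff, not_and]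
    intro h; exact absurd h hyS
  have hCB : Disjoint M' (S \ M') := Finset.sdiff_disjoint.symm
  have h1 : {X} ⊆ S \ M' := by
    intro i hi
    rw [Finset.mem_singleton] at hi
    subst hi
    exact Finset.mem_sdiff.mpr ⟨hMS hXM, hXM'⟩
  have h2 : (M.erase X) \ M' ⊆ S \ M' :=
    Finset.sdiff_subset_sdiff ((Finset.erase_subset _ _).trans hMS) le_rfl
  have key := condIndep_weakUnion p hp.1 {y} (S \ M') M' {X} ((M.erase X) \ M')
    hAB hCB h1 h2 hCI
  have hE : (M.erase X) \ M' ∪ M' = M.erase X := by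
    ext i
    simp only [Finset.mem_union, Finset.mem_sdiff]
    constructor
    · rintro (⟨h, _⟩ | h)
      · exact h
      · exact hM'M h
    · intro h
      by_cases hi : i ∈ M'
      · exact Or.inr hi
      · exact Or.inl ⟨h, hi⟩
  rw [hE] at key
  exact hmin X hXM key


end
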